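/- arXiv:2402.08346 — 3 statements merged into one kernel-verified Lean document; each statement's English description precedes it below -/
import Mathlib

section
/- If S is a locating-dominating set of a graph G and v is a vertex adjacent to a pendant vertex u (a vertex of degree 1 whose unique neighbor is v) with v ∉ S and u ∈ S, then (S ∪ {v}) \ {u} is also a locating-dominating set of G of the same cardinality. -/
/-- A set `S` of vertices is a locating-dominating set of `G`. -/
def IsLocatingDominating {V : Type*} [Fintype V] [DecidableEq V]
    (G : SimpleGraph V) [DecidableRel G.Adj] (S : Finset V) : Prop :=
  (∀ v ∉ S, (G.neighborFinset v ∩ S).Nonempty) ∧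
  ∀ u ∉ S, ∀ v ∉ S, u ≠ v → G.neighborFinset u ∩ S ≠ G.neighborFinset v ∩ S

/-- If `S` is a locating-dominating set, `u` is a pendant vertex (degree 1) whose unique
neighbor is `v`, with `u ∈ S` and `v ∉ S`, then `(S ∪ {v}) \ {u}` is also a
locating-dominating set of the same cardinality. -/
theorem swap_pendant_locatingDominating {V : Type*} [Fintype V] [DecidableEq V]
    (G : SimpleGraph V) [DecidableRel G.Adj] (S : Finset V) (u v : V)
    (hdeg : G.degree u = 1) (hnbr : G.neighborFinset u = {v})
    (huS : u ∈ S) (hvS : v ∉ S)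
    (hS : IsLocatingDominating G S) :
    IsLocatingDominating G ((insert v S).erase u) ∧
      ((insert v S).erase u).card = S.card := by
  classical
  obtain ⟨hdom, hloc⟩ := hS
  have huv : G.Adj u v := by
    have h : v ∈ G.neighborFinset u := by rw [hnbr]; exact Finset.mem_singleton_self v
    rwa [SimpleGraph.mem_neighborFinset] at h
  have hune : u ≠ v := G.ne_of_adj huv
  have hadj_u : ∀ w, G.Adj w u → w = v := by
    intro w h
    have h' : w ∈ G.neighborFinset u := by
      rw [SimpleGraph.mem_neighborFinset]; exact h.symm
    rwa [hnbr, Finset.mem_singleton] at h'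
  set S' := (insert v S).erase u with hS'def
  have hmemS' : ∀ x, x ∈ S' ↔ x ≠ u ∧ (x = v ∨ x ∈ S) := by
    intro x; simp [hS'def, Finset.mem_erase, Finset.mem_insert]
  have hvS' : v ∈ S' := (hmemS' v).2 ⟨hune.symm, Or.inl rfl⟩
  have hnotS : ∀ w, w ∉ S' → w ≠ u → w ∉ S ∧ w ≠ v := by
    intro w hw hwu
    constructor
    · intro h; exact hw ((hmemS' w).2 ⟨hwu, Or.inr h⟩)
    · intro h; exact hw (h ▸ hvS')
  -- key : intersection with S transfers
  have key : ∀ w, w ∉ S → w ≠ v → ∀ x, x ∈ G.neighborFinset w ∩ S →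
      x ∈ G.neighborFinset w ∩ S' := by
    intro w hwS hwv x hx
    rw [Finset.mem_inter] at hx ⊢
    refine ⟨hx.1, (hmemS' x).2 ⟨?_, Or.inr hx.2⟩⟩
    intro h
    exact hwv (hadj_u w (by
      have := hx.1; rw [SimpleGraph.mem_neighborFinset] at this; exact h ▸ this))
  refine ⟨⟨?_, ?_⟩, ?_⟩
  · -- domination
    intro w hw
    by_cases hwu : w = u
    · subst hwu
      exact ⟨v, by rw [Finset.mem_inter, hnbr]; exact ⟨Finset.mem_singleton_self v, hvS'⟩⟩
    · obtain ⟨hwS, hwv⟩ := hnotS w hw hwu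
      obtain ⟨x, hx⟩ := hdom w hwS
      exact ⟨x, key w hwS hwv x hx⟩
  · -- location
    intro w1 hw1 w2 hw2 hne heq
    -- N(u) ∩ S' = {v}
    have hNu : G.neighborFinset u ∩ S' = {v} := by
      rw [hnbr]
      apply Finset.inter_eq_left.2
      simpa using hvS'
    have main : ∀ w, w ∉ S' → w ≠ u → G.neighborFinset w ∩ S' ≠ {v} := by
      intro w hw hwu hcontra
      obtain ⟨hwS, hwv⟩ := hnotS w hw hwu
      obtain ⟨x, hx⟩ := hdom w hwS
      have hx' := key w hwS hwv x hx
      rw [hcontra, Finset.mem_singleton] at hx'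
      subst hx'
      exact hvS (Finset.mem_inter.1 hx).2
    by_cases h1 : w1 = u
    · subst h1
      exact main w2 hw2 (Ne.symm hne) (by rw [← heq, hNu])
    by_cases h2 : w2 = u
    · subst h2
      exact main w1 hw1 hne (by rw [heq, hNu])
    obtain ⟨hw1S, hw1v⟩ := hnotS w1 hw1 h1
    obtain ⟨hw2S, hw2v⟩ := hnotS w2 hw2 h2
    apply hloc w1 hw1S w2 hw2S hne
    ext x
    constructor
    · intro hx
      have hx' := key w1 hw1S hw1v x hx
      rw [heq, Finset.mem_inter] at hx'
      exact Finset.mem_inter.2 ⟨hx'.1, (Finset.mem_inter.1 hx).2⟩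
    · intro hx
      have hx' := key w2 hw2S hw2v x hx
      rw [← heq, Finset.mem_inter] at hx'
      exact Finset.mem_inter.2 ⟨hx'.1, (Finset.mem_inter.1 hx).2⟩
  · -- cardinality
    rw [Finset.card_erase_of_mem (Finset.mem_insert_of_mem huS),
        Finset.card_insert_of_notMem hvS]
    simp
end

section
/- Every instance of Test Cover with |U| = n items in which some test cover exists admits a test cover of size at most n - 1. (Bondy's theorem: if a family of subsets of an n-element set U separates all pairs of elements of U, then some subfamily of size at most n - 1 still separates all pairs.) -/
/-- A family `F` of subsets of `U` separates `U` if for every pair of distinct elements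
there is a set of `F` containing exactly one of them. -/
def Separates {U : Type*} [DecidableEq U] (F : Finset (Finset U)) : Prop :=
  ∀ x y : U, x ≠ y → ∃ T ∈ F, (x ∈ T ∧ y ∉ T) ∨ (y ∈ T ∧ x ∉ T)

/-- signature of an element w.r.t. a family -/
def bondySig {U : Type*} [DecidableEq U] (F : Finset (Finset U)) (x : U) :
    Finset (Finset U) := F.filter (fun T => x ∈ T)

/-- number of distinct signatures -/
def bondyIm {U : Type*} [Fintype U] [DecidableEq U] (F : Finset (Finset U)) :
    Finset (Finset (Finset U)) := Finset.univ.image (bondySig F)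

lemma bondySig_inter {U : Type*} [DecidableEq U] {F F' : Finset (Finset U)}
    (h : F' ⊆ F) (x : U) : bondySig F x ∩ F' = bondySig F' x := by
  ext T
  simp only [bondySig, Finset.mem_inter, Finset.mem_filter]
  exact ⟨fun ⟨⟨_, hx⟩, hT⟩ => ⟨hT, hx⟩, fun ⟨hT, hx⟩ => ⟨⟨h hT, hx⟩, hT⟩⟩

lemma separates_of_inj {U : Type*} [Fintype U] [DecidableEq U] {F : Finset (Finset U)}
    (h : Function.Injective (bondySig F)) : Separates F := by
  intro x y hxy
  have : bondySig F x ≠ bondySig F y := fun he => hxy (h he)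
  rcases not_and_or.1 (fun hss : _ ∧ _ => this (Finset.Subset.antisymm hss.1 hss.2)) with hns | hns <;>
    obtain ⟨T, h1, h2⟩ := Finset.not_subset.1 hns
  · simp only [bondySig, Finset.mem_filter] at h1 h2
    exact ⟨T, h1.1, Or.inl ⟨h1.2, fun hy => h2 ⟨h1.1, hy⟩⟩⟩
  · simp only [bondySig, Finset.mem_filter] at h1 h2
    exact ⟨T, h1.1, Or.inr ⟨h1.2, fun hx => h2 ⟨h1.1, hx⟩⟩⟩

lemma bondy_key {U : Type*} [Fintype U] [DecidableEq U]
    (F : Finset (Finset U)) (hF : Separates F) :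
    ∀ k (F' : Finset (Finset U)), F' ⊆ F →
      Fintype.card U ≤ (bondyIm F').card + k →
      ∃ F'' ⊆ F, F''.card ≤ F'.card + k ∧ Separates F'' := by
  intro k
  induction k with
  | zero =>
    intro F' hsub hcard
    refine ⟨F', hsub, le_refl _, separates_of_inj ?_⟩
    have h1 : (bondyIm F').card ≤ Fintype.card U := by
      simpa [bondyIm, Finset.card_univ] using Finset.card_image_le (s := Finset.univ)
        (f := bondySig F')
    have h2 : (bondyIm F').card = Fintype.card U := le_antisymm h1 (by simpa using hcard)
    have := Finset.injOn_of_card_image_eq (f := bondySig F') (s := Finset.univ)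
      (by simpa [Finset.card_univ, bondyIm] using h2)
    intro a b hab
    exact this (Finset.mem_univ a) (Finset.mem_univ b) hab
  | succ k ih =>
    intro F' hsub hcard
    by_cases hinj : Function.Injective (bondySig F')
    · exact ⟨F', hsub, Nat.le_add_right _ _, separates_of_inj hinj⟩
    · -- find x ≠ y with same signature
      rw [Function.not_injective_iff] at hinj
      obtain ⟨x, y, hsig, hxy⟩ := hinj
      obtain ⟨T, hTF, hor⟩ := hF x y hxy
      -- wlog x ∈ T, y ∉ T
      wlog hx : x ∈ T ∧ y ∉ T generalizing x y
      · exact this y x hsig.symm hxy.symm (Or.symm hor) (hor.resolve_left hx)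
      have hT' : T ∉ F' := fun hT' => hx.2 (by
        have : T ∈ bondySig F' x := Finset.mem_filter.2 ⟨hT', hx.1⟩
        rw [hsig] at this
        exact (Finset.mem_filter.1 this).2)
      have hsub' : insert T F' ⊆ F := Finset.insert_subset hTF hsub
      have hFsub : F' ⊆ insert T F' := Finset.subset_insert _ _
      -- image card strictly increases
      have hne : bondySig (insert T F') x ≠ bondySig (insert T F') y := by
        intro he
        have hxT : T ∈ bondySig (insert T F') x :=
          Finset.mem_filter.2 ⟨Finset.mem_insert_self _ _, hx.1⟩
        rw [he] at hxT
        exact hx.2 (Finset.mem_filter.1 hxT).2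
      have hgrow : (bondyIm F').card + 1 ≤ (bondyIm (insert T F')).card := by
        have hsurj : bondyIm F' ⊆ ((bondyIm (insert T F')).erase (bondySig (insert T F') y)).image
            (· ∩ F') := by
          intro s hs
          obtain ⟨z, _, rfl⟩ := Finset.mem_image.1 hs
          by_cases hz : bondySig (insert T F') z = bondySig (insert T F') y
          · refine Finset.mem_image.2 ⟨bondySig (insert T F') x, ?_, ?_⟩
            · exact Finset.mem_erase.2 ⟨hne, Finset.mem_image_of_mem _ (Finset.mem_univ x)⟩
            · rw [bondySig_inter hFsub, hsig, ← bondySig_inter hFsub y, ← hz,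
                bondySig_inter hFsub]
          · refine Finset.mem_image.2 ⟨bondySig (insert T F') z, ?_, bondySig_inter hFsub z⟩
            exact Finset.mem_erase.2 ⟨hz, Finset.mem_image_of_mem _ (Finset.mem_univ z)⟩
        have h1 : (bondyIm F').card ≤ ((bondyIm (insert T F')).erase
            (bondySig (insert T F') y)).card :=
          le_trans (Finset.card_le_card hsurj) (Finset.card_image_le)
        have hy : bondySig (insert T F') y ∈ bondyIm (insert T F') :=
          Finset.mem_image_of_mem _ (Finset.mem_univ y)
        have h2 := Finset.card_erase_of_mem hy
        have h3 := Finset.card_pos.2 ⟨_, hy⟩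
        omega
      obtain ⟨F'', h1, h2, h3⟩ := ih (insert T F') hsub' (by omega)
      refine ⟨F'', h1, ?_, h3⟩
      have := Finset.card_insert_le T F'
      omega

/-- Bondy's theorem: if a family of subsets of an `n`-element set separates all pairs,
then some subfamily of size at most `n - 1` still separates all pairs. -/
theorem bondy_test_cover {U : Type*} [Fintype U] [DecidableEq U]
    (F : Finset (Finset U)) (hF : Separates F) :
    ∃ F' ⊆ F, F'.card ≤ Fintype.card U - 1 ∧ Separates F' := by
  rcases isEmpty_or_nonempty U with hU | hU
  · exact ⟨∅, Finset.empty_subset _, by simp, fun x y _ => absurd trivial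
      (by exact fun _ => hU.elim x)⟩
  · have him : (bondyIm (∅ : Finset (Finset U))).card = 1 := by
      have hfun : bondySig (∅ : Finset (Finset U)) = fun _ => (∅ : Finset (Finset U)) := by
        funext x; simp [bondySig]
      have : bondyIm (∅ : Finset (Finset U)) = {∅} := by
        rw [bondyIm, hfun, Finset.image_const Finset.univ_nonempty]
      rw [this, Finset.card_singleton]
    have hn : 1 ≤ Fintype.card U := Fintype.card_pos
    obtain ⟨F'', h1, h2, h3⟩ := bondy_key F hF (Fintype.card U - 1) ∅
      (Finset.empty_subset _) (by omega)
    exact ⟨F'', h1, by simpa using h2, h3⟩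
end

section
/- Let S be a locating-dominating set of a graph G in which a variable gadget appears: two claws with centers α⁰, β⁰ and leaves α¹,α²,α³ and β¹,β²,β³ respectively, plus vertices x¹, ¬x¹, x², ¬x² with edges making N(α¹) ⊇ {α⁰, x¹, ¬x¹}, N(α²) ⊇ {α⁰, x², ¬x²}, N(β¹) ⊇ {β⁰, ¬x¹, x²}, N(β²) ⊇ {β⁰, ¬x², x¹}, where α³ and β³ are adjacent only to α⁰ and β⁰ respectively within the gadget. If S contains α⁰ and β⁰ and exactly two further vertices among {x¹, ¬x¹, x², ¬x²} from the gadget, then S ∩ {x¹, ¬x¹, x², ¬x²} equals either {x¹, x²} or {¬x¹, ¬x²}. -/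
/-- Variable gadget: two claws with centers `α⁰, β⁰` and leaves `α¹,α²,α³`, `β¹,β²,β³`,
plus vertices `x¹, ¬x¹, x², ¬x²` with `N(α¹) = {α⁰, x¹, ¬x¹}`, `N(α²) = {α⁰, x², ¬x²}`,
`N(β¹) = {β⁰, ¬x¹, x²}`, `N(β²) = {β⁰, ¬x², x¹}`, `N(α³) = {α⁰}`, `N(β³) = {β⁰}`.
If a locating-dominating set `S` contains `α⁰` and `β⁰`, none of the leaves, and
exactly two vertices among `{x¹, ¬x¹, x², ¬x²}`, then these two vertices are either
`{x¹, x²}` or `{¬x¹, ¬x²}`. -/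
theorem variable_gadget_choice {V : Type*} [Fintype V] [DecidableEq V]
    (G : SimpleGraph V) [DecidableRel G.Adj] (S : Finset V)
    (a0 a1 a2 a3 b0 b1 b2 b3 x1 nx1 x2 nx2 : V)
    (hnodup : ([a0, a1, a2, a3, b0, b1, b2, b3, x1, nx1, x2, nx2] : List V).Nodup)
    (ha1 : G.neighborFinset a1 = {a0, x1, nx1})
    (ha2 : G.neighborFinset a2 = {a0, x2, nx2})
    (ha3 : G.neighborFinset a3 = {a0})
    (hb1 : G.neighborFinset b1 = {b0, nx1, x2})
    (hb2 : G.neighborFinset b2 = {b0, nx2, x1})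
    (hb3 : G.neighborFinset b3 = {b0})
    (hS : IsLocatingDominating G S)
    (ha0S : a0 ∈ S) (hb0S : b0 ∈ S)
    (hleaves : a1 ∉ S ∧ a2 ∉ S ∧ a3 ∉ S ∧ b1 ∉ S ∧ b2 ∉ S ∧ b3 ∉ S)
    (hcard : (S ∩ ({x1, nx1, x2, nx2} : Finset V)).card = 2) :
    S ∩ ({x1, nx1, x2, nx2} : Finset V) = {x1, x2} ∨
      S ∩ ({x1, nx1, x2, nx2} : Finset V) = {nx1, nx2} := by

  obtain ⟨hA1, hA2, hA3, hB1, hB2, hB3⟩ := hleaves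
  simp only [List.nodup_cons, List.mem_cons, List.not_mem_nil, or_false,
    List.nodup_nil, and_true, not_or] at hnodup
  obtain ⟨⟨h01,h02,h03,h04,h05,h06,h07,h08,h09,h010,h011⟩,
    ⟨h12,h13,h14,h15,h16,h17,h18,h19,h110,h111⟩,
    ⟨h23,h24,h25,h26,h27,h28,h29,h210,h211⟩,
    ⟨h34,h35,h36,h37,h38,h39,h310,h311⟩,
    ⟨h45,h46,h47,h48,h49,h410,h411⟩,
    ⟨h56,h57,h58,h59,h510,h511⟩,
    ⟨h67,h68,h69,h610,h611⟩,
    ⟨h78,h79,h710,h711⟩,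
    ⟨h89,h810,h811⟩, ⟨h910,h911⟩, h1011⟩ := hnodup
  have key : ∀ u w p q : V, u ∉ S → w ∉ S → u ≠ w →
      G.neighborFinset u = {a0, p, q} → G.neighborFinset w = {a0} →
      p ∈ S ∨ q ∈ S := by
    intro u w p q hu hw huw hNu hNw
    by_contra h
    push_neg at h
    exact hS.2 u hu w hw huw (by
      ext v
      simp only [hNu, hNw, Finset.mem_inter, Finset.mem_insert, Finset.mem_singleton]
      constructor
      · rintro ⟨(rfl | rfl | rfl), hv⟩
        · exact ⟨rfl, hv⟩
        · exact absurd hv h.1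
        · exact absurd hv h.2
      · rintro ⟨rfl, hv⟩; exact ⟨Or.inl rfl, hv⟩)
  have keyb : ∀ u w p q : V, u ∉ S → w ∉ S → u ≠ w →
      G.neighborFinset u = {b0, p, q} → G.neighborFinset w = {b0} →
      p ∈ S ∨ q ∈ S := by
    intro u w p q hu hw huw hNu hNw
    by_contra h
    push_neg at h
    exact hS.2 u hu w hw huw (by
      ext v
      simp only [hNu, hNw, Finset.mem_inter, Finset.mem_insert, Finset.mem_singleton]
      constructor
      · rintro ⟨(rfl | rfl | rfl), hv⟩
        · exact ⟨rfl, hv⟩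
        · exact absurd hv h.1
        · exact absurd hv h.2
      · rintro ⟨rfl, hv⟩; exact ⟨Or.inl rfl, hv⟩)
  have c1 : x1 ∈ S ∨ nx1 ∈ S := key a1 a3 x1 nx1 hA1 hA3 h13 ha1 ha3
  have c2 : x2 ∈ S ∨ nx2 ∈ S := key a2 a3 x2 nx2 hA2 hA3 h23 ha2 ha3
  have c3 : nx1 ∈ S ∨ x2 ∈ S := keyb b1 b3 nx1 x2 hB1 hB3 h57 hb1 hb3
  have c4 : nx2 ∈ S ∨ x1 ∈ S := keyb b2 b3 nx2 x1 hB2 hB3 h67 hb2 hb3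
  set T := S ∩ ({x1, nx1, x2, nx2} : Finset V) with hT
  have memT : ∀ v : V, v ∈ T ↔ v ∈ S ∧ (v = x1 ∨ v = nx1 ∨ v = x2 ∨ v = nx2) := by
    intro v
    simp [hT, Finset.mem_inter, Finset.mem_insert, Finset.mem_singleton]
  have three : ∀ p q r : V, p ≠ q → p ≠ r → q ≠ r → p ∈ T → q ∈ T → r ∈ T → False := by
    intro p q r hpq hpr hqr hp hq hr
    have : ({p, q, r} : Finset V) ⊆ T := by
      intro v hv
      simp only [Finset.mem_insert, Finset.mem_singleton] at hv
      rcases hv with rfl | rfl | rfl <;> assumption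
    have hc := Finset.card_le_card this
    rw [Finset.card_insert_of_notMem (by simp [hpq, hpr]),
      Finset.card_insert_of_notMem (by simp [hqr]), Finset.card_singleton, hcard] at hc
    omega
  have two : ∀ p q : V, p ≠ q → p ∈ T → q ∈ T → T = {p, q} := by
    intro p q hpq hp hq
    refine (Finset.eq_of_subset_of_card_le ?_ ?_).symm
    · intro v hv
      simp only [Finset.mem_insert, Finset.mem_singleton] at hv
      rcases hv with rfl | rfl <;> assumption
    · rw [hcard, Finset.card_insert_of_notMem (by simp [hpq]), Finset.card_singleton]
  rcases c1 with hx1 | hnx1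
  · have hx1T : x1 ∈ T := (memT x1).2 ⟨hx1, Or.inl rfl⟩
    rcases c3 with hnx1 | hx2
    · have hnx1T : nx1 ∈ T := (memT nx1).2 ⟨hnx1, Or.inr (Or.inl rfl)⟩
      rcases c2 with hx2 | hnx2
      · exact absurd ((memT x2).2 ⟨hx2, Or.inr (Or.inr (Or.inl rfl))⟩)
          (fun h => three x1 nx1 x2 h89 h810 h910 hx1T hnx1T h)
      · exact absurd ((memT nx2).2 ⟨hnx2, Or.inr (Or.inr (Or.inr rfl))⟩)
          (fun h => three x1 nx1 nx2 h89 h811 h911 hx1T hnx1T h)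
    · exact Or.inl (two x1 x2 h810 hx1T ((memT x2).2 ⟨hx2, Or.inr (Or.inr (Or.inl rfl))⟩))
  · have hnx1T : nx1 ∈ T := (memT nx1).2 ⟨hnx1, Or.inr (Or.inl rfl)⟩
    rcases c4 with hnx2 | hx1
    · exact Or.inr (two nx1 nx2 h911 hnx1T ((memT nx2).2 ⟨hnx2, Or.inr (Or.inr (Or.inr rfl))⟩))
    · have hx1T : x1 ∈ T := (memT x1).2 ⟨hx1, Or.inl rfl⟩
      rcases c2 with hx2 | hnx2
      · exact absurd ((memT x2).2 ⟨hx2, Or.inr (Or.inr (Or.inl rfl))⟩)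
          (fun h => three x1 nx1 x2 h89 h810 h910 hx1T hnx1T h)
      · exact absurd ((memT nx2).2 ⟨hnx2, Or.inr (Or.inr (Or.inr rfl))⟩)
          (fun h => three x1 nx1 nx2 h89 h811 h911 hx1T hnx1T h)
end
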